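/- arXiv:1412.6821 — 6 statements merged into one kernel-verified Lean document; each statement's English description precedes it below -/
import Mathlib

section
/- For u, v ∈ ℝ² and σ > 0, define N_u : ℝ² → ℝ by N_u(x) = (1/(4πσ)) · exp(-‖x - u‖²/(4σ)). Then the L²(ℝ²) norm of N_u - N_v equals (1/√(4πσ)) · √(1 - exp(-‖u - v‖²/(8σ))). -/
open MeasureTheory Real

local notation "V2" => EuclideanSpace ℝ (Fin 2)

lemma gauss_int {c : ℝ} (hc : 0 < c) (w : V2) :
    ∫ x : V2, rexp (-c * ‖x - w‖ ^ 2) = π / c := by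
  rw [MeasureTheory.integral_sub_right_eq_self (fun x : V2 => rexp (-c * ‖x‖ ^ 2)) w]
  rw [GaussianFourier.integral_rexp_neg_mul_sq_norm hc]
  norm_num [finrank_euclideanSpace_fin]

lemma gauss_integrable {c : ℝ} (hc : 0 < c) (w : V2) :
    Integrable (fun x : V2 => rexp (-c * ‖x - w‖ ^ 2)) := by
  have h0 := GaussianFourier.integrable_cexp_neg_mul_sq_norm_add (V := V2) (b := (c:ℂ)) (by simpa using hc) 0 0
  have h1 : Integrable (fun x : V2 => rexp (-c * ‖x‖ ^ 2)) := by
    have := h0.norm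
    simpa [Complex.norm_exp, ← Complex.ofReal_pow] using this
  exact h1.comp_sub_right w

lemma par (u v x : EuclideanSpace ℝ (Fin 2)) :
    ‖x-u‖^2 + ‖x-v‖^2 = 2*‖x - (2:ℝ)⁻¹ • (u+v)‖^2 + ‖u-v‖^2/2 := by
  simp only [norm_sub_sq_real, inner_smul_right, inner_add_right, norm_smul,
    mul_pow, norm_add_sq_real, real_inner_comm v u, Real.norm_eq_abs, sq_abs]
  ring

/-- L² distance between two Gaussians. -/
theorem l2_norm_gaussian_difference (u v : EuclideanSpace ℝ (Fin 2)) (σ : ℝ) (hσ : 0 < σ)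
    (N : EuclideanSpace ℝ (Fin 2) → EuclideanSpace ℝ (Fin 2) → ℝ)
    (hN : ∀ w x, N w x = (1 / (4 * π * σ)) * Real.exp (-‖x - w‖ ^ 2 / (4 * σ))) :
    Real.sqrt (∫ x : EuclideanSpace ℝ (Fin 2), |N u x - N v x| ^ 2)
      = (1 / Real.sqrt (4 * π * σ)) * Real.sqrt (1 - Real.exp (-‖u - v‖ ^ 2 / (8 * σ))) := by
  have hπ : 0 < π := Real.pi_pos
  set C : ℝ := 1 / (4 * π * σ) with hC
  set E : ℝ := rexp (-‖u-v‖ ^ 2 / (8 * σ)) with hE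
  set m : V2 := (2:ℝ)⁻¹ • (u+v) with hm
  have hc : (0:ℝ) < (2*σ)⁻¹ := by positivity
  have expand : ∀ x : V2, |N u x - N v x| ^ 2 =
      C^2 * rexp (-(2*σ)⁻¹ * ‖x-u‖^2) + C^2 * rexp (-(2*σ)⁻¹ * ‖x-v‖^2)
      - (2 * (C^2 * E)) * rexp (-(2*σ)⁻¹ * ‖x-m‖^2) := by
    intro x
    rw [sq_abs, hN, hN, sub_sq]
    have e1 : ∀ A : ℝ, (C * rexp (-A/(4*σ)))^2 = C^2 * rexp (-(2*σ)⁻¹ * A) := by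
      intro A
      rw [mul_pow, sq (rexp _), ← Real.exp_add]
      congr 1
      field_simp
      ring
    rw [e1, e1]
    have hexp : -‖x-u‖^2/(4*σ) + -‖x-v‖^2/(4*σ)
        = -‖u-v‖^2/(8*σ) + -(2*σ)⁻¹ * ‖x - (2:ℝ)⁻¹ • (u+v)‖^2 :=
      by linear_combination (-(4*σ)⁻¹) * par u v x
    have e2 : C * rexp (-‖x-u‖^2/(4*σ)) * (C * rexp (-‖x-v‖^2/(4*σ)))
        = C^2 * (E * rexp (-(2*σ)⁻¹ * ‖x-m‖^2)) := by
      rw [mul_mul_mul_comm, ← Real.exp_add, hexp, Real.exp_add, ← sq, hm, hE]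
    rw [mul_assoc 2, e2]
    ring
  simp only [expand]
  have i1 := (gauss_integrable hc u).const_mul (C^2)
  have i2 := (gauss_integrable hc v).const_mul (C^2)
  have i3 := (gauss_integrable hc m).const_mul (2 * (C^2 * E))
  have i12 : Integrable (fun x : V2 => C^2 * rexp (-(2*σ)⁻¹ * ‖x-u‖^2) + C^2 * rexp (-(2*σ)⁻¹ * ‖x-v‖^2)) := i1.add i2
  rw [integral_sub i12 i3, integral_add i1 i2, integral_const_mul, integral_const_mul, integral_const_mul, gauss_int hc, gauss_int hc, gauss_int hc]
  have hval : C^2 * (π / (2*σ)⁻¹) + C^2 * (π / (2*σ)⁻¹) - 2 * (C^2*E) * (π / (2*σ)⁻¹)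
      = (1/(4*π*σ)) * (1 - E) := by
    rw [hC]
    field_simp
    ring
  rw [hval, Real.sqrt_mul (by positivity), one_div, Real.sqrt_inv, one_div]
end

section
/- The feature map Φ_σ is injective on finite multisets of points strictly above the diagonal: if F, G are finite multisets contained in {(x₁,x₂) ∈ ℝ² : x₂ > x₁} with Φ_σ(F) = Φ_σ(G) as functions on ℝ², then F = G. -/
open MeasureTheory Real

noncomputable def mk2 (a b : ℝ) : EuclideanSpace ℝ (Fin 2) :=
  (WithLp.equiv 2 (Fin 2 → ℝ)).symm ![a, b]

/-- Reflection of a point across the diagonal. -/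
noncomputable def pbar (p : EuclideanSpace ℝ (Fin 2)) : EuclideanSpace ℝ (Fin 2) :=
  mk2 (p 1) (p 0)

/-- The persistence scale space feature map. -/
noncomputable def Phi (σ : ℝ) (D : Multiset (EuclideanSpace ℝ (Fin 2)))
    (x : EuclideanSpace ℝ (Fin 2)) : ℝ :=
  (1 / (4 * π * σ)) *
    (D.map (fun p => Real.exp (-‖x - p‖ ^ 2 / (4 * σ)) -
      Real.exp (-‖x - pbar p‖ ^ 2 / (4 * σ)))).sum

noncomputable def chiE (σ : ℝ) (p : EuclideanSpace ℝ (Fin 2)) :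
    Multiplicative (EuclideanSpace ℝ (Fin 2)) →* ℝ where
  toFun x := Real.exp ((inner ℝ (Multiplicative.toAdd x) p : ℝ) / (2 * σ))
  map_one' := by simp
  map_mul' x y := by
    simp [← Real.exp_add, inner_add_left, add_div]

lemma chiE_injective (σ : ℝ) (hσ : σ ≠ 0) : Function.Injective (chiE σ) := by
  intro p q hpq
  have hx : ∀ x : EuclideanSpace ℝ (Fin 2),
      x 0 * p 0 + x 1 * p 1 = x 0 * q 0 + x 1 * q 1 := by
    intro x
    have h1 := congrFun (congrArg (DFunLike.coe) hpq) (Multiplicative.ofAdd x)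
    simp only [chiE, MonoidHom.coe_mk, OneHom.coe_mk, toAdd_ofAdd] at h1
    have h2 := Real.exp_injective h1
    simp only [PiLp.inner_apply, RCLike.inner_apply, conj_trivial,
      Fin.sum_univ_two] at h2
    field_simp at h2
    linarith
  have h0 := hx (EuclideanSpace.single 0 1)
  have h1 := hx (EuclideanSpace.single 1 1)
  simp [EuclideanSpace.single_apply] at h0 h1
  ext i
  fin_cases i
  · exact h0
  · exact h1

lemma gauss_inj (σ : ℝ) (hσ : 0 < σ) (A B : Multiset (EuclideanSpace ℝ (Fin 2)))
    (h : ∀ x, (A.map (fun p => Real.exp (-‖x - p‖ ^ 2 / (4 * σ)))).sum =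
              (B.map (fun p => Real.exp (-‖x - p‖ ^ 2 / (4 * σ)))).sum) : A = B := by
  classical
  set S : Finset (EuclideanSpace ℝ (Fin 2)) := (A + B).toFinset with hS
  have hsubA : A.toFinset ⊆ S := fun p hp =>
    Multiset.mem_toFinset.mpr (Multiset.mem_add.mpr (Or.inl (Multiset.mem_toFinset.mp hp)))
  have hsubB : B.toFinset ⊆ S := fun p hp =>
    Multiset.mem_toFinset.mpr (Multiset.mem_add.mpr (Or.inr (Multiset.mem_toFinset.mp hp)))
  have hker : ∀ (x p : EuclideanSpace ℝ (Fin 2)), Real.exp (-‖x - p‖ ^ 2 / (4 * σ)) =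
      Real.exp (-‖x‖ ^ 2 / (4 * σ)) * (Real.exp (-‖p‖ ^ 2 / (4 * σ)) * chiE σ p (Multiplicative.ofAdd x)) := by
    intro x p
    simp only [chiE, MonoidHom.coe_mk, OneHom.coe_mk, toAdd_ofAdd]
    rw [← Real.exp_add, ← Real.exp_add]
    congr 1
    have hn : ‖x - p‖ ^ 2 = ‖x‖ ^ 2 - 2 * inner ℝ x p + ‖p‖ ^ 2 := norm_sub_sq_real x p
    rw [hn]
    field_simp
    ring
  have key : ∀ x : EuclideanSpace ℝ (Fin 2), ∑ p ∈ S,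
      (((A.count p : ℝ) - B.count p) * Real.exp (-‖p‖ ^ 2 / (4 * σ))) * chiE σ p (Multiplicative.ofAdd x) = 0 := by
    intro x
    have hA : (A.map (fun p => Real.exp (-‖x - p‖ ^ 2 / (4 * σ)))).sum =
        ∑ p ∈ S, (A.count p : ℝ) * Real.exp (-‖x - p‖ ^ 2 / (4 * σ)) := by
      rw [Finset.sum_multiset_map_count]
      simp only [nsmul_eq_mul]
      exact Finset.sum_subset hsubA (fun p _ hp => by
        simp [Multiset.count_eq_zero_of_notMem (by simpa using hp)])
    have hB : (B.map (fun p => Real.exp (-‖x - p‖ ^ 2 / (4 * σ)))).sum =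
        ∑ p ∈ S, (B.count p : ℝ) * Real.exp (-‖x - p‖ ^ 2 / (4 * σ)) := by
      rw [Finset.sum_multiset_map_count]
      simp only [nsmul_eq_mul]
      exact Finset.sum_subset hsubB (fun p _ hp => by
        simp [Multiset.count_eq_zero_of_notMem (by simpa using hp)])
    have h0 : ∑ p ∈ S, ((A.count p : ℝ) - B.count p) * Real.exp (-‖x - p‖ ^ 2 / (4 * σ)) = 0 := by
      have hx := h x
      rw [hA, hB] at hx
      simp only [sub_mul]
      rw [Finset.sum_sub_distrib]
      linarith
    have hexp : Real.exp (-‖x‖ ^ 2 / (4 * σ)) ≠ 0 := Real.exp_ne_zero _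
    have h2 : Real.exp (-‖x‖ ^ 2 / (4 * σ)) * ∑ p ∈ S,
        (((A.count p : ℝ) - B.count p) * Real.exp (-‖p‖ ^ 2 / (4 * σ))) * chiE σ p (Multiplicative.ofAdd x) = 0 := by
      rw [Finset.mul_sum, ← h0]
      exact Finset.sum_congr rfl (fun p _ => by rw [hker x p]; ring)
    exact (mul_eq_zero.mp h2).resolve_left hexp
  have li : LinearIndependent ℝ (fun p : {p // p ∈ S} => ⇑(chiE σ p.val)) := by
    exact (linearIndependent_monoidHom (Multiplicative (EuclideanSpace ℝ (Fin 2))) ℝ).comp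
      (fun p : {p // p ∈ S} => chiE σ p.val)
      (fun p q hpq => Subtype.ext (chiE_injective σ hσ.ne' hpq))
  have hcoef : ∀ p ∈ S, ((A.count p : ℝ) - B.count p) * Real.exp (-‖p‖ ^ 2 / (4 * σ)) = 0 := by
    have hli := linearIndependent_iff'.mp li Finset.univ
      (fun p => ((A.count p.val : ℝ) - B.count p.val) * Real.exp (-‖p.val‖ ^ 2 / (4 * σ)))
    intro p hp
    refine hli ?_ ⟨p, hp⟩ (Finset.mem_univ _)
    funext x
    have hk := key (Multiplicative.toAdd x)
    simp only [ofAdd_toAdd] at hk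
    simpa [Finset.sum_apply, ← Finset.sum_attach S
      (fun p => (((A.count p : ℝ) - B.count p) * Real.exp (-‖p‖ ^ 2 / (4 * σ))) * chiE σ p x)] using hk
  have hcount : ∀ p, A.count p = B.count p := by
    intro p
    by_cases hp : p ∈ S
    · have h3 : ((A.count p : ℝ) - B.count p) = 0 :=
        (mul_eq_zero.mp (hcoef p hp)).resolve_right (Real.exp_ne_zero _)
      exact_mod_cast sub_eq_zero.mp h3
    · simp only [hS, Multiset.toFinset_add, Finset.mem_union, Multiset.mem_toFinset, not_or] at hp
      rw [Multiset.count_eq_zero_of_notMem hp.1, Multiset.count_eq_zero_of_notMem hp.2]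
  exact Multiset.ext.mpr hcount

lemma pbar_apply0 (p : EuclideanSpace ℝ (Fin 2)) : pbar p 0 = p 1 := rfl
lemma pbar_apply1 (p : EuclideanSpace ℝ (Fin 2)) : pbar p 1 = p 0 := rfl

/-- injectivity of the feature map on diagrams strictly above the diagonal. -/
theorem Phi_injective (σ : ℝ) (hσ : 0 < σ)
    (F G : Multiset (EuclideanSpace ℝ (Fin 2)))
    (hF : ∀ p ∈ F, p 0 < p 1) (hG : ∀ p ∈ G, p 0 < p 1)
    (h : Phi σ F = Phi σ G) : F = G := by
  classical
  set f : EuclideanSpace ℝ (Fin 2) → EuclideanSpace ℝ (Fin 2) → ℝ :=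
    fun x p => Real.exp (-‖x - p‖ ^ 2 / (4 * σ)) with hf
  have hc : (1 / (4 * π * σ)) ≠ 0 := by positivity
  have hsum : ∀ x, (F.map (fun p => f x p - f x (pbar p))).sum =
      (G.map (fun p => f x p - f x (pbar p))).sum := by
    intro x
    have hx := congrFun h x
    simp only [Phi] at hx
    exact mul_left_cancel₀ hc hx
  have hAB : F + G.map pbar = G + F.map pbar := by
    apply gauss_inj σ hσ
    intro x
    have hx := hsum x
    simp only [Multiset.map_add, Multiset.sum_add, Multiset.map_map, Function.comp]
    have hFs : (F.map (fun p => f x p - f x (pbar p))).sum =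
        (F.map (f x)).sum - (F.map (fun p => f x (pbar p))).sum := by
      rw [← Multiset.sum_map_sub]
    have hGs : (G.map (fun p => f x p - f x (pbar p))).sum =
        (G.map (f x)).sum - (G.map (fun p => f x (pbar p))).sum := by
      rw [← Multiset.sum_map_sub]
    rw [hFs, hGs] at hx
    linarith
  have hcount : ∀ p, F.count p = G.count p := by
    intro p
    by_cases hp : p 0 < p 1
    · have hnF : p ∉ F.map pbar := by
        intro hmem
        obtain ⟨q, hq, hqe⟩ := Multiset.mem_map.mp hmem
        have hq2 := hF q hq
        rw [← hqe, pbar_apply0, pbar_apply1] at hp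
        linarith
      have hnG : p ∉ G.map pbar := by
        intro hmem
        obtain ⟨q, hq, hqe⟩ := Multiset.mem_map.mp hmem
        have hq2 := hG q hq
        rw [← hqe, pbar_apply0, pbar_apply1] at hp
        linarith
      have hcc := congrArg (Multiset.count p) hAB
      simpa [Multiset.count_eq_zero_of_notMem hnF, Multiset.count_eq_zero_of_notMem hnG]
        using hcc
    · rw [Multiset.count_eq_zero_of_notMem (fun hm => hp (hF p hm)),
        Multiset.count_eq_zero_of_notMem (fun hm => hp (hG p hm))]
  exact Multiset.ext.mpr hcount
end

section
/- Stability of the persistence scale space kernel: let F, G be finite multisets in ℝ² (above the diagonal), σ > 0, and let γ be any bijective matching between F ∪ Δ_F and G ∪ Δ_G obtained by augmenting with diagonal points so the multisets have equal size. Then ‖Φ_σ(F) - Φ_σ(G)‖_{L²(ℝ²)} ≤ (1/(2σ√π)) Σ_u ‖u - γ(u)‖₂, where the sum is over the augmented multiset. -/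
open MeasureTheory Real

/- ### Auxiliary development -/

abbrev E2 := EuclideanSpace ℝ (Fin 2)

noncomputable def gg (σ : ℝ) (p : E2) (x : E2) : ℝ := Real.exp (-‖x - p‖ ^ 2 / (4 * σ))

lemma pbar_self {p : E2} (h : p 0 = p 1) : pbar p = p := by
  ext i
  fin_cases i <;> simp [pbar, mk2, h]

lemma norm_pbar_sub_pbar (u v : E2) : ‖pbar u - pbar v‖ = ‖u - v‖ := by
  simp [EuclideanSpace.norm_eq, Fin.sum_univ_two, pbar, mk2]
  ring_nf

lemma continuous_gg (σ : ℝ) (p : E2) : Continuous (gg σ p) := by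
  unfold gg; fun_prop

lemma integrable_exp_shift (b : ℝ) (hb : 0 < b) (m : E2) :
    Integrable (fun x : E2 => Real.exp (-b * ‖x - m‖ ^ 2)) := by
  have h : Integrable (fun x : E2 => Real.exp (-b * ‖x‖ ^ 2)) := by
    have := GaussianFourier.integrable_cexp_neg_mul_sq_norm_add (V := E2) (b := (b : ℂ))
      (by simpa using hb) 0 0
    have := this.re
    refine this.congr (Filter.Eventually.of_forall fun x => ?_)
    simp [Complex.exp_ofReal_re, ← Complex.ofReal_pow, ← Complex.ofReal_neg,
      ← Complex.ofReal_mul]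
  simpa using h.comp_sub_right m

lemma integral_exp_shift (b : ℝ) (hb : 0 < b) (m : E2) :
    ∫ x : E2, Real.exp (-b * ‖x - m‖ ^ 2) = π / b := by
  rw [integral_sub_right_eq_self (fun x : E2 => Real.exp (-b * ‖x‖ ^ 2)) m]
  rw [GaussianFourier.integral_rexp_neg_mul_sq_norm hb]
  simp [finrank_euclideanSpace_fin]

lemma gg_mul (σ : ℝ) (hσ : 0 < σ) (p q x : E2) :
    gg σ p x * gg σ q x =
      Real.exp (-‖p - q‖ ^ 2 / (8 * σ)) *
        Real.exp (-(1 / (2 * σ)) * ‖x - (2 : ℝ)⁻¹ • (p + q)‖ ^ 2) := by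
  set m : E2 := (2 : ℝ)⁻¹ • (p + q) with hm
  have key : ‖x - p‖ ^ 2 + ‖x - q‖ ^ 2 = 2 * ‖x - m‖ ^ 2 + ‖p - q‖ ^ 2 / 2 := by
    have hpl := parallelogram_law_with_norm ℝ (x - p) (x - q)
    have h1 : x - p + (x - q) = (2 : ℝ) • (x - m) := by
      rw [hm]; module
    have h2 : x - p - (x - q) = q - p := by abel
    rw [h1, h2, norm_smul] at hpl
    have h3 : ‖q - p‖ = ‖p - q‖ := norm_sub_rev _ _
    rw [h3] at hpl
    simp only [Real.norm_ofNat] at hpl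
    nlinarith [hpl]
  rw [gg, gg, ← Real.exp_add, ← Real.exp_add]
  congr 1
  have h8 : (8 : ℝ) * σ ≠ 0 := by positivity
  field_simp
  linear_combination (-16:ℝ) * key

lemma integrable_gg_mul (σ : ℝ) (hσ : 0 < σ) (p q : E2) :
    Integrable (fun x => gg σ p x * gg σ q x) := by
  have h : Integrable (fun x : E2 =>
      Real.exp (-‖p - q‖ ^ 2 / (8 * σ)) *
        Real.exp (-(1 / (2 * σ)) * ‖x - (2 : ℝ)⁻¹ • (p + q)‖ ^ 2)) :=
    (integrable_exp_shift (1 / (2 * σ)) (by positivity) _).const_mul _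
  exact h.congr (Filter.Eventually.of_forall fun x => (gg_mul σ hσ p q x).symm)

lemma integral_gg_mul (σ : ℝ) (hσ : 0 < σ) (p q : E2) :
    ∫ x : E2, gg σ p x * gg σ q x = (2 * π * σ) * Real.exp (-‖p - q‖ ^ 2 / (8 * σ)) := by
  simp_rw [gg_mul σ hσ p q]
  rw [integral_const_mul, integral_exp_shift (1 / (2 * σ)) (by positivity)]
  have : π / (1 / (2 * σ)) = 2 * π * σ := by field_simp
  rw [this]; ring

lemma memℒp_gg (σ : ℝ) (hσ : 0 < σ) (p : E2) : MemLp (gg σ p) 2 volume := by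
  rw [memLp_two_iff_integrable_sq (continuous_gg σ p).aestronglyMeasurable]
  have := integrable_gg_mul σ hσ p p
  exact this.congr (Filter.Eventually.of_forall fun x => (sq (gg σ p x)).symm)

noncomputable def gLp (σ : ℝ) (hσ : 0 < σ) (p : E2) : Lp ℝ 2 (volume : Measure E2) :=
  (memℒp_gg σ hσ p).toLp _

lemma gLp_coeFn_sub (σ : ℝ) (hσ : 0 < σ) (p q : E2) :
    ⇑(gLp σ hσ p - gLp σ hσ q) =ᵐ[volume] fun x => gg σ p x - gg σ q x :=
  (Lp.coeFn_sub _ _).trans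
    (((memℒp_gg σ hσ p).coeFn_toLp).sub ((memℒp_gg σ hσ q).coeFn_toLp))

lemma norm_gLp_sub_sq (σ : ℝ) (hσ : 0 < σ) (p q : E2) :
    ‖gLp σ hσ p - gLp σ hσ q‖ ^ 2 =
      4 * π * σ * (1 - Real.exp (-‖p - q‖ ^ 2 / (8 * σ))) := by
  have h1 : ‖gLp σ hσ p - gLp σ hσ q‖ ^ 2 =
      ∫ x : E2, (gg σ p x - gg σ q x) * (gg σ p x - gg σ q x) := by
    rw [← real_inner_self_eq_norm_sq, MeasureTheory.L2.inner_def]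
    refine integral_congr_ae ?_
    filter_upwards [gLp_coeFn_sub σ hσ p q] with x hx
    rw [hx]
    simp [RCLike.inner_apply]
    ring
  rw [h1]
  have ipp := integrable_gg_mul σ hσ p p
  have ipq := integrable_gg_mul σ hσ p q
  have iqq := integrable_gg_mul σ hσ q q
  have hre : (fun x : E2 => (gg σ p x - gg σ q x) * (gg σ p x - gg σ q x)) =
      fun x => gg σ p x * gg σ p x + gg σ q x * gg σ q x - 2 * (gg σ p x * gg σ q x) :=
    funext fun x => by ring
  have hI : Integrable (fun x : E2 => gg σ p x * gg σ p x + gg σ q x * gg σ q x) volume :=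
    ipp.add iqq
  have hC : Integrable (fun x : E2 => 2 * (gg σ p x * gg σ q x)) volume :=
    ipq.const_mul 2
  rw [hre, integral_sub hI hC, integral_add ipp iqq,
    integral_const_mul, integral_gg_mul σ hσ, integral_gg_mul σ hσ, integral_gg_mul σ hσ]
  simp only [sub_self, norm_zero]
  norm_num [Real.exp_zero]
  ring

lemma norm_gLp_sub_le (σ : ℝ) (hσ : 0 < σ) (p q : E2) :
    ‖gLp σ hσ p - gLp σ hσ q‖ ≤ Real.sqrt (π / 2) * ‖p - q‖ := by
  have hπ := pi_pos
  have hsq : ‖gLp σ hσ p - gLp σ hσ q‖ ^ 2 ≤ π / 2 * ‖p - q‖ ^ 2 := by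
    rw [norm_gLp_sub_sq σ hσ]
    rw [neg_div]
    set t : ℝ := ‖p - q‖ ^ 2 / (8 * σ) with ht
    have h1 : 1 - Real.exp (-t) ≤ t := by
      have := Real.add_one_le_exp (-t)
      linarith
    have ht' : 4 * π * σ * t = π / 2 * ‖p - q‖ ^ 2 := by
      rw [ht]; field_simp; ring
    have h2 : 4 * π * σ * (1 - Real.exp (-t)) ≤ 4 * π * σ * t :=
      mul_le_mul_of_nonneg_left h1 (by positivity)
    linarith [ht'.symm ▸ h2]
  calc ‖gLp σ hσ p - gLp σ hσ q‖ = Real.sqrt (‖gLp σ hσ p - gLp σ hσ q‖ ^ 2) :=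
        (Real.sqrt_sq (norm_nonneg _)).symm
    _ ≤ Real.sqrt (π / 2 * ‖p - q‖ ^ 2) := Real.sqrt_le_sqrt hsq
    _ = Real.sqrt (π / 2) * ‖p - q‖ := by
        rw [Real.sqrt_mul (by positivity), Real.sqrt_sq (norm_nonneg _)]

/-- the per-point Lp element -/
noncomputable def psiL (σ : ℝ) (hσ : 0 < σ) (p : E2) : Lp ℝ 2 (volume : Measure E2) :=
  gLp σ hσ p - gLp σ hσ (pbar p)

noncomputable def psif (σ : ℝ) (p : E2) (x : E2) : ℝ := gg σ p x - gg σ (pbar p) x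

lemma psiL_coeFn (σ : ℝ) (hσ : 0 < σ) (p : E2) :
    ⇑(psiL σ hσ p) =ᵐ[volume] psif σ p :=
  gLp_coeFn_sub σ hσ p (pbar p)

lemma norm_psiL_sub_le (σ : ℝ) (hσ : 0 < σ) (u v : E2) :
    ‖psiL σ hσ u - psiL σ hσ v‖ ≤ 2 * Real.sqrt (π / 2) * ‖u - v‖ := by
  have h1 : psiL σ hσ u - psiL σ hσ v =
      (gLp σ hσ u - gLp σ hσ v) - (gLp σ hσ (pbar u) - gLp σ hσ (pbar v)) := by
    rw [psiL, psiL]; abel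
  rw [h1]
  calc ‖(gLp σ hσ u - gLp σ hσ v) - (gLp σ hσ (pbar u) - gLp σ hσ (pbar v))‖
      ≤ ‖gLp σ hσ u - gLp σ hσ v‖ + ‖gLp σ hσ (pbar u) - gLp σ hσ (pbar v)‖ :=
        norm_sub_le _ _
    _ ≤ Real.sqrt (π / 2) * ‖u - v‖ + Real.sqrt (π / 2) * ‖pbar u - pbar v‖ :=
        add_le_add (norm_gLp_sub_le σ hσ u v) (norm_gLp_sub_le σ hσ _ _)
    _ = 2 * Real.sqrt (π / 2) * ‖u - v‖ := by rw [norm_pbar_sub_pbar]; ring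

lemma coeFn_multiset_sum {α : Type*} (s : Multiset α)
    (f : α → Lp ℝ 2 (volume : Measure E2)) (g : α → E2 → ℝ)
    (h : ∀ a, ⇑(f a) =ᵐ[volume] g a) :
    ⇑((s.map f).sum) =ᵐ[volume] fun x => (s.map (fun a => g a x)).sum := by
  induction s using Multiset.induction with
  | empty => simp only [Multiset.map_zero, Multiset.sum_zero]; exact Lp.coeFn_zero ℝ 2 (volume : Measure E2)
  | cons a s ih =>
      simp only [Multiset.map_cons, Multiset.sum_cons]
      refine (Lp.coeFn_add _ _).trans ?_
      filter_upwards [h a, ih] with x hx1 hx2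
      simp only [Pi.add_apply, Multiset.map_cons, Multiset.sum_cons, hx1, hx2]

lemma Phi_diag_invariant (σ : ℝ) (F DF : Multiset E2) (hDF : ∀ p ∈ DF, p 0 = p 1) (x : E2) :
    Phi σ (F + DF) x = Phi σ F x := by
  rw [Phi, Phi, Multiset.map_add, Multiset.sum_add]
  have : (DF.map (fun p => Real.exp (-‖x - p‖ ^ 2 / (4 * σ)) -
      Real.exp (-‖x - pbar p‖ ^ 2 / (4 * σ)))).sum = 0 := by
    refine Multiset.sum_eq_zero fun y hy => ?_
    obtain ⟨p, hp, rfl⟩ := Multiset.mem_map.mp hy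
    rw [pbar_self (hDF p hp), sub_self]
  rw [this, add_zero]

/-- stability of the feature map w.r.t. the 1-Wasserstein matching cost.
The matching γ is encoded by a multiset M of pairs whose first (resp. second) components
enumerate the augmented diagram F' ⊇ F (resp. G' ⊇ G), the added points lying on the diagonal. -/
theorem Phi_stability (σ : ℝ) (hσ : 0 < σ)
    (F G F' G' : Multiset (EuclideanSpace ℝ (Fin 2)))
    (M : Multiset (EuclideanSpace ℝ (Fin 2) × EuclideanSpace ℝ (Fin 2)))
    (hF : ∃ DF, F' = F + DF ∧ ∀ p ∈ DF, p 0 = p 1)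
    (hG : ∃ DG, G' = G + DG ∧ ∀ p ∈ DG, p 0 = p 1)
    (hM1 : M.map Prod.fst = F') (hM2 : M.map Prod.snd = G') :
    Real.sqrt (∫ x : EuclideanSpace ℝ (Fin 2), (Phi σ F x - Phi σ G x) ^ 2)
      ≤ (1 / (2 * σ * Real.sqrt π)) * (M.map (fun uv => ‖uv.1 - uv.2‖)).sum := by
  obtain ⟨DF, rfl, hDF⟩ := hF
  obtain ⟨DG, rfl, hDG⟩ := hG
  have hπ := pi_pos
  set H : Lp ℝ 2 (volume : Measure E2) :=
    (1 / (4 * π * σ)) • (M.map (fun uv => psiL σ hσ uv.1 - psiL σ hσ uv.2)).sum with hH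
  -- pointwise description of Phi σ F - Phi σ G
  have hpt : ∀ x : E2, Phi σ F x - Phi σ G x =
      (1 / (4 * π * σ)) * (M.map (fun uv => psif σ uv.1 x - psif σ uv.2 x)).sum := by
    intro x
    have h1 : Phi σ F x = (1 / (4 * π * σ)) * (M.map (fun uv => psif σ uv.1 x)).sum := by
      rw [← Phi_diag_invariant σ F DF hDF x, Phi, ← hM1, Multiset.map_map]
      rfl
    have h2 : Phi σ G x = (1 / (4 * π * σ)) * (M.map (fun uv => psif σ uv.2 x)).sum := by
      rw [← Phi_diag_invariant σ G DG hDG x, Phi, ← hM2, Multiset.map_map]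
      rfl
    rw [h1, h2, ← mul_sub]
    congr 1
    rw [← Multiset.sum_map_sub]
  -- a.e. identification of H
  have hae : ⇑H =ᵐ[volume] fun x => Phi σ F x - Phi σ G x := by
    refine (Lp.coeFn_smul _ _).trans ?_
    have hs := coeFn_multiset_sum M (fun uv => psiL σ hσ uv.1 - psiL σ hσ uv.2)
      (fun uv x => psif σ uv.1 x - psif σ uv.2 x) (fun uv => ?_)
    · filter_upwards [hs] with x hx
      simp only [Pi.smul_apply, hx, smul_eq_mul]
      rw [hpt x]
    · exact (Lp.coeFn_sub _ _).trans ((psiL_coeFn σ hσ _).sub (psiL_coeFn σ hσ _))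
  -- the L² norm equals the square root of the integral
  have hint : ∫ x : E2, (Phi σ F x - Phi σ G x) ^ 2 = ‖H‖ ^ 2 := by
    rw [← real_inner_self_eq_norm_sq, MeasureTheory.L2.inner_def]
    refine integral_congr_ae ?_
    filter_upwards [hae] with x hx
    rw [hx]
    simp [RCLike.inner_apply]
  rw [hint, Real.sqrt_sq (norm_nonneg _)]
  -- bound the norm of H
  have hnormsum : ‖(M.map (fun uv => psiL σ hσ uv.1 - psiL σ hσ uv.2)).sum‖
      ≤ (M.map (fun uv => 2 * Real.sqrt (π / 2) * ‖uv.1 - uv.2‖)).sum := by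
    refine le_trans (norm_multiset_sum_le _) ?_
    rw [Multiset.map_map]
    exact Multiset.sum_map_le_sum_map _ _ fun uv _ => norm_psiL_sub_le σ hσ uv.1 uv.2
  have hnormH : ‖H‖ ≤ (1 / (4 * π * σ)) * (2 * Real.sqrt (π / 2)) *
      (M.map (fun uv => ‖uv.1 - uv.2‖)).sum := by
    rw [hH, norm_smul]
    have habs : ‖(1 : ℝ) / (4 * π * σ)‖ = 1 / (4 * π * σ) := by
      rw [Real.norm_eq_abs, abs_of_pos (by positivity)]
    rw [habs]
    have h2 : (M.map (fun uv => 2 * Real.sqrt (π / 2) * ‖uv.1 - uv.2‖)).sum =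
        2 * Real.sqrt (π / 2) * (M.map (fun uv => ‖uv.1 - uv.2‖)).sum := by
      rw [← Multiset.sum_map_mul_left]
    calc (1 / (4 * π * σ)) * ‖(M.map (fun uv => psiL σ hσ uv.1 - psiL σ hσ uv.2)).sum‖
        ≤ (1 / (4 * π * σ)) *
          ((M.map (fun uv => 2 * Real.sqrt (π / 2) * ‖uv.1 - uv.2‖)).sum) :=
          mul_le_mul_of_nonneg_left hnormsum (by positivity)
      _ = (1 / (4 * π * σ)) * (2 * Real.sqrt (π / 2)) *
          (M.map (fun uv => ‖uv.1 - uv.2‖)).sum := by rw [h2]; ring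
  refine hnormH.trans ?_
  have hT : (0 : ℝ) ≤ (M.map (fun uv => ‖uv.1 - uv.2‖)).sum :=
    Multiset.sum_nonneg fun y hy => by
      obtain ⟨uv, _, rfl⟩ := Multiset.mem_map.mp hy
      exact norm_nonneg _
  refine mul_le_mul_of_nonneg_right ?_ hT
  -- constant comparison : √(π/2)/(2πσ) ≤ 1/(2σ√π)
  have hc : Real.sqrt (π / 2) * Real.sqrt π ≤ π := by
    rw [← Real.sqrt_mul (by positivity)]
    calc Real.sqrt (π / 2 * π) ≤ Real.sqrt (π * π) :=
          Real.sqrt_le_sqrt (by nlinarith)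
      _ = π := Real.sqrt_mul_self (le_of_lt hπ)
  have hsπ : 0 < Real.sqrt π := Real.sqrt_pos.mpr hπ
  rw [div_mul_eq_mul_div, one_mul, div_le_div_iff₀ (by positivity) (by positivity)]
  nlinarith [hc, hsπ, hπ, hσ, Real.sq_sqrt (le_of_lt hπ)]
end

section
/- If F is a finite nonempty multiset of points strictly above the diagonal in ℝ², then k_σ(F,F) > 0, where k_σ(F,G) = (1/(8πσ)) Σ_{p∈F, q∈G} (exp(-‖p-q‖²/(8σ)) - exp(-‖p-q̄‖²/(8σ))). -/
open Real

/-- The persistence scale space kernel. -/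
noncomputable def kPSS (σ : ℝ) (F G : Multiset (EuclideanSpace ℝ (Fin 2))) : ℝ :=
  (1 / (8 * π * σ)) *
    (F.map (fun p => (G.map (fun q =>
      Real.exp (-‖p - q‖ ^ 2 / (8 * σ)) -
        Real.exp (-‖p - pbar q‖ ^ 2 / (8 * σ)))).sum)).sum

namespace KPSSProof

lemma pbar_zero (q : EuclideanSpace ℝ (Fin 2)) : pbar q 0 = q 1 := by
  simp [pbar, mk2, WithLp.equiv_symm_apply]

lemma pbar_one (q : EuclideanSpace ℝ (Fin 2)) : pbar q 1 = q 0 := by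
  simp [pbar, mk2, WithLp.equiv_symm_apply]

lemma normsq (x : EuclideanSpace ℝ (Fin 2)) : ‖x‖ ^ 2 = (x 0) ^ 2 + (x 1) ^ 2 := by
  rw [EuclideanSpace.norm_eq, Real.sq_sqrt (by positivity)]
  simp [Fin.sum_univ_two, Real.norm_eq_abs, sq_abs]

lemma msum_sub {α : Type*} (s : Multiset α) (f g : α → ℝ) :
    (s.map (fun a => f a - g a)).sum = (s.map f).sum - (s.map g).sum := by
  induction s using Multiset.induction with
  | empty => simp
  | cons a s ih => simp only [Multiset.map_cons, Multiset.sum_cons, ih]; ring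

lemma msum_finsum {α β : Type*} (s : Multiset α) (t : Finset β) (f : α → β → ℝ) :
    (s.map (fun a => ∑ b ∈ t, f a b)).sum = ∑ b ∈ t, (s.map (fun a => f a b)).sum := by
  induction s using Multiset.induction with
  | empty => simp
  | cons a s ih => simp [ih, Finset.sum_add_distrib]

lemma msum_summable {α : Type*} (s : Multiset α) (f : α → ℕ → ℝ)
    (hf : ∀ a ∈ s, Summable (f a)) :
    Summable (fun n => (s.map (fun a => f a n)).sum) := by
  induction s using Multiset.induction with
  | empty => simpa using summable_zero
  | cons a s ih =>
      simp only [Multiset.map_cons, Multiset.sum_cons]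
      exact (hf a (Multiset.mem_cons_self a s)).add
        (ih fun b hb => hf b (Multiset.mem_cons_of_mem hb))

lemma msum_tsum {α : Type*} (s : Multiset α) (f : α → ℕ → ℝ)
    (hf : ∀ a ∈ s, Summable (f a)) :
    (s.map (fun a => ∑' n, f a n)).sum = ∑' n, (s.map (fun a => f a n)).sum := by
  induction s using Multiset.induction with
  | empty => simp
  | cons a s ih =>
      simp only [Multiset.map_cons, Multiset.sum_cons]
      rw [ih (fun b hb => hf b (Multiset.mem_cons_of_mem hb)),
        Summable.tsum_add (hf a (Multiset.mem_cons_self a s))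
          (msum_summable s f (fun b hb => hf b (Multiset.mem_cons_of_mem hb)))]

lemma msum_nonneg {α : Type*} (s : Multiset α) (f : α → ℝ)
    (h : ∀ a ∈ s, 0 ≤ f a) : 0 ≤ (s.map f).sum := by
  induction s using Multiset.induction with
  | empty => simp
  | cons a s ih =>
      simp only [Multiset.map_cons, Multiset.sum_cons]
      have := h a (Multiset.mem_cons_self a s)
      have := ih fun b hb => h b (Multiset.mem_cons_of_mem hb)
      linarith

lemma single_lt_msum {α : Type*} (s : Multiset α) (f : α → ℝ)
    (h0 : ∀ a ∈ s, 0 ≤ f a) {a : α} (ha : a ∈ s) (hpos : 0 < f a) :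
    0 < (s.map f).sum := by
  obtain ⟨t, rfl⟩ := Multiset.exists_cons_of_mem ha
  simp only [Multiset.map_cons, Multiset.sum_cons]
  have := msum_nonneg t f (fun b hb => h0 b (Multiset.mem_cons_of_mem hb))
  linarith

noncomputable def g (σ : ℝ) (p : EuclideanSpace ℝ (Fin 2)) : ℝ :=
  Real.exp (-((p 0) ^ 2 + (p 1) ^ 2) / (8 * σ))

noncomputable def A (σ : ℝ) (F : Multiset (EuclideanSpace ℝ (Fin 2))) (a b : ℕ) : ℝ :=
  (F.map (fun p => g σ p * (p 0) ^ a * (p 1) ^ b)).sum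

noncomputable def term (σ : ℝ) (p q : EuclideanSpace ℝ (Fin 2)) (k : ℕ) : ℝ :=
  (1 / (4 * σ)) ^ k / (k.factorial : ℝ) *
    (g σ p * g σ q * ((p 0 * q 0 + p 1 * q 1) ^ k - (p 0 * q 1 + p 1 * q 0) ^ k))

lemma exp_tsum (x : ℝ) : Real.exp x = ∑' n : ℕ, x ^ n / (n.factorial : ℝ) := by
  rw [Real.exp_eq_exp_ℝ, NormedSpace.exp_eq_tsum_div]

lemma term_eq (σ : ℝ) (p q : EuclideanSpace ℝ (Fin 2)) (k : ℕ) :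
    term σ p q k = g σ p * g σ q *
      (((p 0 * q 0 + p 1 * q 1) / (4 * σ)) ^ k / (k.factorial : ℝ)
        - ((p 0 * q 1 + p 1 * q 0) / (4 * σ)) ^ k / (k.factorial : ℝ)) := by
  unfold term; simp only [div_pow]; ring

lemma term_summable (σ : ℝ) (p q : EuclideanSpace ℝ (Fin 2)) :
    Summable (term σ p q) := by
  have : term σ p q = fun k => g σ p * g σ q *
      (((p 0 * q 0 + p 1 * q 1) / (4 * σ)) ^ k / (k.factorial : ℝ)
        - ((p 0 * q 1 + p 1 * q 0) / (4 * σ)) ^ k / (k.factorial : ℝ)) :=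
    funext fun k => term_eq σ p q k
  rw [this]
  exact ((Real.summable_pow_div_factorial _).sub (Real.summable_pow_div_factorial _)).mul_left _

lemma pair (σ : ℝ) (hσ : 0 < σ) (p q : EuclideanSpace ℝ (Fin 2)) :
    Real.exp (-‖p - q‖ ^ 2 / (8 * σ)) - Real.exp (-‖p - pbar q‖ ^ 2 / (8 * σ))
      = ∑' k, term σ p q k := by
  have hσ' : σ ≠ 0 := ne_of_gt hσ
  have e1 : -‖p - q‖ ^ 2 / (8 * σ)
      = -((p 0) ^ 2 + (p 1) ^ 2) / (8 * σ) + -((q 0) ^ 2 + (q 1) ^ 2) / (8 * σ)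
        + (p 0 * q 0 + p 1 * q 1) / (4 * σ) := by
    rw [normsq]; simp only [PiLp.sub_apply]; field_simp; ring
  have e2 : -‖p - pbar q‖ ^ 2 / (8 * σ)
      = -((p 0) ^ 2 + (p 1) ^ 2) / (8 * σ) + -((q 0) ^ 2 + (q 1) ^ 2) / (8 * σ)
        + (p 0 * q 1 + p 1 * q 0) / (4 * σ) := by
    rw [normsq]; simp only [PiLp.sub_apply, pbar_zero, pbar_one]; field_simp; ring
  rw [e1, e2, Real.exp_add, Real.exp_add, Real.exp_add, Real.exp_add]
  have := tsum_congr (L := SummationFilter.unconditional ℕ) (fun k => term_eq σ p q k)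
  rw [this, tsum_mul_left,
    Summable.tsum_sub (Real.summable_pow_div_factorial _) (Real.summable_pow_div_factorial _),
    ← exp_tsum, ← exp_tsum]
  unfold g; ring

lemma term_expand (σ : ℝ) (p q : EuclideanSpace ℝ (Fin 2)) (k : ℕ) :
    term σ p q k = ∑ j ∈ Finset.range (k + 1),
      ((1 / (4 * σ)) ^ k / (k.factorial : ℝ) * (k.choose j : ℝ)
          * (g σ p * (p 0) ^ j * (p 1) ^ (k - j)))
        * (g σ q * (q 0) ^ j * (q 1) ^ (k - j) - g σ q * (q 0) ^ (k - j) * (q 1) ^ j) := by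
  unfold term
  rw [add_pow, add_pow, ← Finset.sum_sub_distrib, Finset.mul_sum, Finset.mul_sum]
  exact Finset.sum_congr rfl fun j hj => by ring

lemma qsum (σ : ℝ) (F : Multiset (EuclideanSpace ℝ (Fin 2))) (p : EuclideanSpace ℝ (Fin 2))
    (k : ℕ) :
    (F.map (fun q => term σ p q k)).sum
      = ∑ j ∈ Finset.range (k + 1),
        ((1 / (4 * σ)) ^ k / (k.factorial : ℝ) * (k.choose j : ℝ)
            * (g σ p * (p 0) ^ j * (p 1) ^ (k - j)))
          * (A σ F j (k - j) - A σ F (k - j) j) := by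
  rw [show F.map (fun q => term σ p q k) = F.map (fun q =>
      ∑ j ∈ Finset.range (k + 1),
      ((1 / (4 * σ)) ^ k / (k.factorial : ℝ) * (k.choose j : ℝ)
          * (g σ p * (p 0) ^ j * (p 1) ^ (k - j)))
        * (g σ q * (q 0) ^ j * (q 1) ^ (k - j) - g σ q * (q 0) ^ (k - j) * (q 1) ^ j))
    from Multiset.map_congr rfl fun q _ => term_expand σ p q k]
  rw [msum_finsum]
  refine Finset.sum_congr rfl fun j hj => ?_
  rw [Multiset.sum_map_mul_left, msum_sub]
  rfl

lemma psum (σ : ℝ) (F : Multiset (EuclideanSpace ℝ (Fin 2))) (k : ℕ) :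
    (F.map (fun p => (F.map (fun q => term σ p q k)).sum)).sum
      = (1 / (4 * σ)) ^ k / (k.factorial : ℝ) *
          ∑ j ∈ Finset.range (k + 1), (k.choose j : ℝ)
            * (A σ F j (k - j) * (A σ F j (k - j) - A σ F (k - j) j)) := by
  rw [show F.map (fun p => (F.map (fun q => term σ p q k)).sum) = F.map (fun p =>
      ∑ j ∈ Finset.range (k + 1),
        ((1 / (4 * σ)) ^ k / (k.factorial : ℝ) * (k.choose j : ℝ)
            * (g σ p * (p 0) ^ j * (p 1) ^ (k - j)))
          * (A σ F j (k - j) - A σ F (k - j) j))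
    from Multiset.map_congr rfl fun p _ => qsum σ F p k]
  rw [msum_finsum, Finset.mul_sum]
  refine Finset.sum_congr rfl fun j hj => ?_
  have : (fun p : EuclideanSpace ℝ (Fin 2) =>
        ((1 / (4 * σ)) ^ k / (k.factorial : ℝ) * (k.choose j : ℝ)
            * (g σ p * (p 0) ^ j * (p 1) ^ (k - j)))
          * (A σ F j (k - j) - A σ F (k - j) j))
      = fun p => ((1 / (4 * σ)) ^ k / (k.factorial : ℝ) * (k.choose j : ℝ)
          * (A σ F j (k - j) - A σ F (k - j) j)) * (g σ p * (p 0) ^ j * (p 1) ^ (k - j)) :=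
    funext fun p => by ring
  rw [this, Multiset.sum_map_mul_left]
  show _ * A σ F j (k - j) = _
  ring

lemma sym (σ : ℝ) (F : Multiset (EuclideanSpace ℝ (Fin 2))) (k : ℕ) :
    ∑ j ∈ Finset.range (k + 1), (k.choose j : ℝ)
        * (A σ F j (k - j) * (A σ F j (k - j) - A σ F (k - j) j))
      = (1 / 2) * ∑ j ∈ Finset.range (k + 1), (k.choose j : ℝ)
        * (A σ F j (k - j) - A σ F (k - j) j) ^ 2 := by
  have hrefl : ∑ j ∈ Finset.range (k + 1), (k.choose j : ℝ)
        * (A σ F j (k - j) * (A σ F j (k - j) - A σ F (k - j) j))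
      = ∑ j ∈ Finset.range (k + 1), (k.choose j : ℝ)
        * (A σ F (k - j) j * (A σ F (k - j) j - A σ F j (k - j))) := by
    rw [← Finset.sum_range_reflect]
    refine Finset.sum_congr rfl fun j hj => ?_
    have hj' : j ≤ k := Nat.lt_succ_iff.mp (Finset.mem_range.mp hj)
    simp only [Nat.add_sub_cancel]
    rw [Nat.sub_sub_self hj', Nat.choose_symm hj']
  rw [Finset.mul_sum]
  nth_rewrite 1 [show (∑ j ∈ Finset.range (k + 1), (k.choose j : ℝ)
        * (A σ F j (k - j) * (A σ F j (k - j) - A σ F (k - j) j)))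
      = (1/2) * ((∑ j ∈ Finset.range (k + 1), (k.choose j : ℝ)
        * (A σ F j (k - j) * (A σ F j (k - j) - A σ F (k - j) j)))
        + (∑ j ∈ Finset.range (k + 1), (k.choose j : ℝ)
        * (A σ F (k - j) j * (A σ F (k - j) j - A σ F j (k - j))))) from by
    rw [← hrefl]; ring]
  rw [← Finset.sum_add_distrib, Finset.mul_sum]
  exact Finset.sum_congr rfl fun j hj => by ring

/-- The linear functional. -/
noncomputable def L (σ : ℝ) (F : Multiset (EuclideanSpace ℝ (Fin 2)))
    (f : ℝ → ℝ → ℝ) : ℝ :=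
  (F.map (fun p => g σ p * (f (p 0) (p 1) - f (p 1) (p 0)))).sum

lemma L_add (σ : ℝ) (F : Multiset (EuclideanSpace ℝ (Fin 2))) (f h : ℝ → ℝ → ℝ) :
    L σ F (fun x y => f x y + h x y) = L σ F f + L σ F h := by
  unfold L
  rw [show (F.map (fun p => g σ p * (f (p 0) (p 1) + h (p 0) (p 1)
      - (f (p 1) (p 0) + h (p 1) (p 0))))) = F.map (fun p =>
      g σ p * (f (p 0) (p 1) - f (p 1) (p 0)) - (- (g σ p * (h (p 0) (p 1) - h (p 1) (p 0)))))
    from Multiset.map_congr rfl fun p _ => by ring]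
  rw [msum_sub]
  rw [show (F.map (fun p => - (g σ p * (h (p 0) (p 1) - h (p 1) (p 0)))))
      = F.map (fun p => (0:ℝ) - (g σ p * (h (p 0) (p 1) - h (p 1) (p 0))))
    from Multiset.map_congr rfl fun p _ => by ring, msum_sub]
  simp

lemma L_smul (σ : ℝ) (F : Multiset (EuclideanSpace ℝ (Fin 2))) (c : ℝ) (f : ℝ → ℝ → ℝ) :
    L σ F (fun x y => c * f x y) = c * L σ F f := by
  unfold L
  rw [show (F.map (fun p => g σ p * (c * f (p 0) (p 1) - c * f (p 1) (p 0))))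
      = F.map (fun p => c * (g σ p * (f (p 0) (p 1) - f (p 1) (p 0))))
    from Multiset.map_congr rfl fun p _ => by ring]
  exact Multiset.sum_map_mul_left

lemma exists_A_ne (σ : ℝ) (F : Multiset (EuclideanSpace ℝ (Fin 2)))
    (hne : F ≠ 0) (hF : ∀ p ∈ F, p 0 < p 1) :
    ∃ a b : ℕ, A σ F a b ≠ A σ F b a := by
  classical
  by_contra hcon
  push_neg at hcon
  have hmono : ∀ a b : ℕ, L σ F (fun x y => x ^ a * y ^ b) = 0 := by
    intro a b
    have : L σ F (fun x y => x ^ a * y ^ b) = A σ F a b - A σ F b a := by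
      unfold L
      rw [show (F.map (fun p => g σ p * ((p 0) ^ a * (p 1) ^ b - (p 1) ^ a * (p 0) ^ b)))
          = F.map (fun p => g σ p * (p 0) ^ a * (p 1) ^ b - g σ p * (p 0) ^ b * (p 1) ^ a)
        from Multiset.map_congr rfl fun p _ => by ring, msum_sub]
      rfl
    rw [this, hcon a b, sub_self]
  have key : ∀ s : Finset (ℝ × ℝ), ∀ a b : ℕ,
      L σ F (fun x y => (∏ v ∈ s, ((x - v.1) ^ 2 + (y - v.2) ^ 2)) * x ^ a * y ^ b) = 0 := by
    intro s
    induction s using Finset.induction_on with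
    | empty => intro a b; simpa using hmono a b
    | @insert v s hv ih =>
        intro a b
        have hfun : (fun x y => (∏ u ∈ insert v s, ((x - u.1) ^ 2 + (y - u.2) ^ 2))
              * x ^ a * y ^ b)
            = fun x y =>
              ((∏ u ∈ s, ((x - u.1) ^ 2 + (y - u.2) ^ 2)) * x ^ (a + 2) * y ^ b
              + ((∏ u ∈ s, ((x - u.1) ^ 2 + (y - u.2) ^ 2)) * x ^ a * y ^ (b + 2)
              + ((-(2 * v.1)) * ((∏ u ∈ s, ((x - u.1) ^ 2 + (y - u.2) ^ 2)) * x ^ (a + 1) * y ^ b)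
              + ((-(2 * v.2)) * ((∏ u ∈ s, ((x - u.1) ^ 2 + (y - u.2) ^ 2)) * x ^ a * y ^ (b + 1))
              + ((v.1 ^ 2 + v.2 ^ 2) * ((∏ u ∈ s, ((x - u.1) ^ 2 + (y - u.2) ^ 2)) * x ^ a * y ^ b)))))) := by
          funext x y
          rw [Finset.prod_insert hv]
          ring
        rw [hfun, L_add, L_add, L_add, L_add, L_smul, L_smul, L_smul,
          ih, ih, ih, ih, ih]
        ring
  obtain ⟨p₀, hp₀⟩ := Multiset.exists_mem_of_ne_zero hne
  set u : ℝ × ℝ := (p₀ 0, p₀ 1) with hu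
  set W : Finset (ℝ × ℝ) :=
    F.toFinset.image (fun p => ((p 0 : ℝ), (p 1 : ℝ)))
      ∪ F.toFinset.image (fun p => ((p 1 : ℝ), (p 0 : ℝ))) with hW
  set s : Finset (ℝ × ℝ) := W.erase u with hs
  set Q : ℝ → ℝ → ℝ := fun x y => ∏ v ∈ s, ((x - v.1) ^ 2 + (y - v.2) ^ 2) with hQdef
  have hQ0 : L σ F Q = 0 := by
    have := key s 0 0
    simpa using this
  have hrefl0 : ∀ p ∈ F, Q (p 1) (p 0) = 0 := by
    intro p hp
    have hmem : ((p 1 : ℝ), (p 0 : ℝ)) ∈ W := by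
      apply Finset.mem_union_right
      exact Finset.mem_image_of_mem _ (Multiset.mem_toFinset.mpr hp)
    have hne' : ((p 1 : ℝ), (p 0 : ℝ)) ≠ u := by
      intro h
      have h1 : p 1 = u.1 := congrArg Prod.fst h
      have h2 : p 0 = u.2 := congrArg Prod.snd h
      have hu12 : u.1 < u.2 := hF p₀ hp₀
      have := hF p hp
      rw [h1, h2] at this
      linarith
    have hmems : ((p 1 : ℝ), (p 0 : ℝ)) ∈ s := Finset.mem_erase.mpr ⟨hne', hmem⟩
    exact Finset.prod_eq_zero hmems (by simp)
  have hQnonneg : ∀ x y : ℝ, 0 ≤ Q x y := fun x y =>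
    Finset.prod_nonneg fun v _ => by positivity
  have hQu : 0 < Q u.1 u.2 := by
    apply Finset.prod_pos
    intro v hv
    have hvne : v ≠ u := Finset.ne_of_mem_erase hv
    rcases eq_or_ne v.1 u.1 with h1 | h1
    · have h2 : v.2 ≠ u.2 := fun h2 => hvne (Prod.ext h1 h2)
      have hz : u.2 - v.2 ≠ 0 := sub_ne_zero.mpr (Ne.symm h2)
      positivity
    · have hz : u.1 - v.1 ≠ 0 := sub_ne_zero.mpr (Ne.symm h1)
      positivity
  have hpos : 0 < L σ F Q := by
    unfold L
    refine single_lt_msum F _ (fun p hp => ?_) hp₀ ?_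
    · rw [hrefl0 p hp, sub_zero]
      exact mul_nonneg (Real.exp_pos _).le (hQnonneg _ _)
    · rw [hrefl0 p₀ hp₀, sub_zero]
      exact mul_pos (Real.exp_pos _) hQu
  exact absurd hQ0 (ne_of_gt hpos)

end KPSSProof

open KPSSProof in
/-- k_σ(F,F) > 0 for nonempty diagrams strictly above the diagonal. -/
theorem kPSS_self_pos (σ : ℝ) (hσ : 0 < σ)
    (F : Multiset (EuclideanSpace ℝ (Fin 2)))
    (hne : F ≠ 0) (hF : ∀ p ∈ F, p 0 < p 1) :
    0 < kPSS σ F F := by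
  unfold kPSS
  have hπ := Real.pi_pos
  apply mul_pos (by positivity)
  set t : ℕ → ℝ := fun k => (F.map (fun p => (F.map (fun q => term σ p q k)).sum)).sum with ht
  have hD : (F.map (fun p => (F.map (fun q =>
      Real.exp (-‖p - q‖ ^ 2 / (8 * σ)) -
        Real.exp (-‖p - pbar q‖ ^ 2 / (8 * σ)))).sum)).sum = ∑' k, t k := by
    rw [show F.map (fun p => (F.map (fun q =>
        Real.exp (-‖p - q‖ ^ 2 / (8 * σ)) -
          Real.exp (-‖p - pbar q‖ ^ 2 / (8 * σ)))).sum)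
        = F.map (fun p => ∑' k, (F.map (fun q => term σ p q k)).sum) from
      Multiset.map_congr rfl fun p _ => by
        rw [show F.map (fun q =>
            Real.exp (-‖p - q‖ ^ 2 / (8 * σ)) -
              Real.exp (-‖p - pbar q‖ ^ 2 / (8 * σ)))
            = F.map (fun q => ∑' k, term σ p q k) from
          Multiset.map_congr rfl fun q _ => pair σ hσ p q]
        exact msum_tsum F _ fun q _ => term_summable σ p q]
    exact msum_tsum F _ fun p _ => msum_summable F _ fun q _ => term_summable σ p q
  rw [hD]
  have htsummable : Summable t :=
    msum_summable F _ fun p _ => msum_summable F _ fun q _ => term_summable σ p q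
  have htnonneg : ∀ k, 0 ≤ t k := by
    intro k
    rw [ht]
    simp only []
    rw [psum σ F k, sym σ F k]
    have h1 : (0:ℝ) ≤ (1 / (4 * σ)) ^ k / (k.factorial : ℝ) := by positivity
    have h2 : (0:ℝ) ≤ ∑ j ∈ Finset.range (k + 1), (k.choose j : ℝ)
        * (A σ F j (k - j) - A σ F (k - j) j) ^ 2 :=
      Finset.sum_nonneg fun j _ => mul_nonneg (Nat.cast_nonneg _) (sq_nonneg _)
    nlinarith
  obtain ⟨a, b, hab⟩ := exists_A_ne σ F hne hF
  have htpos : 0 < t (a + b) := by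
    rw [ht]
    simp only []
    rw [psum σ F (a + b), sym σ F (a + b)]
    have h1 : (0:ℝ) < (1 / (4 * σ)) ^ (a + b) / ((a + b).factorial : ℝ) := by positivity
    have hmem : a ∈ Finset.range (a + b + 1) := Finset.mem_range.mpr (by omega)
    have hterm : 0 < ((a + b).choose a : ℝ)
        * (A σ F a (a + b - a) - A σ F (a + b - a) a) ^ 2 := by
      have hb : a + b - a = b := by omega
      rw [hb]
      have hc : 0 < ((a + b).choose a : ℝ) := by
        exact_mod_cast Nat.choose_pos (Nat.le_add_right a b)
      have hs : A σ F a b - A σ F b a ≠ 0 := sub_ne_zero.mpr hab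
      positivity
    have hle := Finset.single_le_sum
      (f := fun j => ((a + b).choose j : ℝ) * (A σ F j (a + b - j) - A σ F (a + b - j) j) ^ 2)
      (fun j _ => mul_nonneg (Nat.cast_nonneg _) (sq_nonneg _)) hmem
    have h2 : 0 < ∑ j ∈ Finset.range (a + b + 1), ((a + b).choose j : ℝ)
        * (A σ F j (a + b - j) - A σ F (a + b - j) j) ^ 2 := lt_of_lt_of_le hterm hle
    nlinarith
  exact Summable.tsum_pos htsummable htnonneg (a + b) htpos
end

section
/- The persistence scale space kernel is positive definite: for any finite collection F₁, …, F_m of finite multisets in ℝ² and any c₁, …, c_m ∈ ℝ, Σ_{i,j} c_i c_j k_σ(F_i, F_j) ≥ 0, where k_σ(F,G) = (1/(8πσ)) Σ_{p∈F, q∈G} (exp(-‖p-q‖²/(8σ)) - exp(-‖p-q̄‖²/(8σ))). -/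
open Real

namespace KPSSaux

open MeasureTheory

abbrev V := EuclideanSpace ℝ (Fin 2)

variable {σ : ℝ}

lemma norm_sq_eq (v : V) : ‖v‖^2 = (v 0)^2 + (v 1)^2 := by
  rw [EuclideanSpace.norm_eq, Real.sq_sqrt (by positivity), Fin.sum_univ_two]
  simp [sq_abs]

lemma norm_pbar_sub_pbar (p q : V) : ‖pbar p - pbar q‖ = ‖p - q‖ := by
  have h1 : ‖pbar p - pbar q‖^2 = ‖p - q‖^2 := by
    rw [norm_sq_eq, norm_sq_eq]
    simp [pbar, mk2, PiLp.sub_apply]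
    ring
  nlinarith [norm_nonneg (pbar p - pbar q), norm_nonneg (p - q)]

lemma norm_pbar_sub (p q : V) : ‖pbar p - q‖ = ‖p - pbar q‖ := by
  have h1 : ‖pbar p - q‖^2 = ‖p - pbar q‖^2 := by
    rw [norm_sq_eq, norm_sq_eq]
    simp [pbar, mk2, PiLp.sub_apply]
    ring
  nlinarith [norm_nonneg (pbar p - q), norm_nonneg (p - pbar q)]

lemma integrable_gauss {b : ℝ} (hb : 0 < b) :
    Integrable (fun v : V => rexp (-(b * ‖v‖^2))) := by
  have h := (GaussianFourier.integrable_cexp_neg_mul_sq_norm_add (V := V) (b := (b:ℂ))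
    (by simpa using hb) 0 0).norm
  have hx : ∀ v : V, ‖Complex.exp (-(b:ℂ) * ‖v‖^2 + 0 * (inner ℝ ((0:V)) v : ℝ))‖
      = rexp (-(b * ‖v‖^2)) := by
    intro v
    rw [Complex.norm_exp]
    norm_num [← Complex.ofReal_pow]
  simpa only [hx] using h

lemma integral_gauss {b : ℝ} (hb : 0 < b) :
    ∫ v : V, rexp (-(b * ‖v‖^2)) = π / b := by
  have h := GaussianFourier.integral_rexp_neg_mul_sq_norm (V := V) hb
  simp only [neg_mul] at h ⊢
  rw [h]
  norm_num [finrank_euclideanSpace_fin]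

/-- The translated Gaussian feature. -/
noncomputable def g (σ : ℝ) (a : V) (x : V) : ℝ := rexp (-‖x - a‖^2 / (4*σ))

lemma integrable_g (hσ : 0 < σ) (a : V) : Integrable (g σ a) := by
  have hb : 0 < 1/(4*σ) := by positivity
  have e : (fun x : V => rexp (-(1/(4*σ) * ‖x - a‖^2))) = g σ a := by
    funext x
    unfold g
    congr 1
    field_simp
  rw [← e]
  exact (integrable_gauss hb).comp_sub_right a

lemma key_identity (a b x : V) :
    ‖x - a‖^2 + ‖x - b‖^2 = 2*‖x - (2:ℝ)⁻¹ • (a+b)‖^2 + ‖a-b‖^2/2 := by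
  have hpar := parallelogram_law_with_norm ℝ (x-a) (x-b)
  have h1 : (x-a) + (x-b) = (2:ℝ) • (x - (2:ℝ)⁻¹ • (a+b)) := by
    rw [smul_sub, smul_smul]
    norm_num
    module
  have h2 : (x-a) - (x-b) = b - a := by abel
  rw [h1, h2, norm_smul, norm_sub_rev b a] at hpar
  simp only [Real.norm_ofNat, mul_pow] at hpar
  nlinarith [hpar]

lemma pointwise_prod (hσ : 0 < σ) (a b x : V) :
    g σ a x * g σ b x =
      rexp (-((1/(2*σ)) * ‖x - (2:ℝ)⁻¹ • (a+b)‖^2)) * rexp (-‖a-b‖^2/(8*σ)) := by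
  unfold g
  rw [← Real.exp_add, ← Real.exp_add]
  have h := key_identity a b x
  set A := ‖x-a‖^2 with hA
  set B := ‖x-b‖^2 with hB
  set M := ‖x - (2:ℝ)⁻¹ • (a+b)‖^2 with hM
  set D := ‖a-b‖^2 with hD
  congr 1
  have e : -A/(4*σ) + -B/(4*σ) = -(A+B)/(4*σ) := by ring
  rw [e, h]
  field_simp
  ring

lemma integrable_g_mul (hσ : 0 < σ) (a b : V) :
    Integrable (fun x => g σ a x * g σ b x) := by
  have hb : 0 < 1/(2*σ) := by positivity
  have h := ((integrable_gauss hb).comp_sub_right ((2:ℝ)⁻¹ • (a+b))).mul_const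
    (rexp (-‖a-b‖^2/(8*σ)))
  exact h.congr (Filter.Eventually.of_forall fun x => (pointwise_prod hσ a b x).symm)

lemma integral_g_mul (hσ : 0 < σ) (a b : V) :
    ∫ x, g σ a x * g σ b x = (2*π*σ) * rexp (-‖a-b‖^2/(8*σ)) := by
  have hb : 0 < 1/(2*σ) := by positivity
  calc ∫ x, g σ a x * g σ b x
      = ∫ x, rexp (-((1/(2*σ)) * ‖x - (2:ℝ)⁻¹ • (a+b)‖^2)) * rexp (-‖a-b‖^2/(8*σ)) := by
        congr 1; ext x; exact pointwise_prod hσ a b x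
    _ = (∫ x : V, rexp (-((1/(2*σ)) * ‖x - (2:ℝ)⁻¹ • (a+b)‖^2))) * rexp (-‖a-b‖^2/(8*σ)) :=
        integral_mul_const _ _
    _ = (π / (1/(2*σ))) * rexp (-‖a-b‖^2/(8*σ)) := by
        rw [integral_sub_right_eq_self (fun y : V => rexp (-((1/(2*σ)) * ‖y‖^2))),
          integral_gauss hb]
    _ = (2*π*σ) * rexp (-‖a-b‖^2/(8*σ)) := by
        congr 1; field_simp

/-- The feature function of a single point. -/
noncomputable def psi (σ : ℝ) (p : V) (x : V) : ℝ := g σ p x - g σ (pbar p) x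

lemma psi_mul_eq (p q : V) : (fun x => psi σ p x * psi σ q x) =
    fun x => g σ p x * g σ q x - g σ p x * g σ (pbar q) x
      - g σ (pbar p) x * g σ q x + g σ (pbar p) x * g σ (pbar q) x := by
  funext x
  unfold psi
  ring

lemma integrable_psi_mul (hσ : 0 < σ) (p q : V) :
    Integrable (fun x => psi σ p x * psi σ q x) := by
  rw [psi_mul_eq]
  exact (((integrable_g_mul hσ p q).sub (integrable_g_mul hσ p (pbar q))).sub
    (integrable_g_mul hσ (pbar p) q)).add (integrable_g_mul hσ (pbar p) (pbar q))

lemma integral_psi_mul (hσ : 0 < σ) (p q : V) :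
    ∫ x, psi σ p x * psi σ q x =
      (4*π*σ) * (rexp (-‖p - q‖^2/(8*σ)) - rexp (-‖p - pbar q‖^2/(8*σ))) := by
  rw [psi_mul_eq]
  have I12 : Integrable (fun x => g σ p x * g σ q x - g σ p x * g σ (pbar q) x) :=
    (integrable_g_mul hσ p q).sub (integrable_g_mul hσ p (pbar q))
  have I123 : Integrable (fun x =>
      g σ p x * g σ q x - g σ p x * g σ (pbar q) x - g σ (pbar p) x * g σ q x) :=
    I12.sub (integrable_g_mul hσ (pbar p) q)
  rw [integral_add I123 (integrable_g_mul hσ (pbar p) (pbar q)),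
    integral_sub I12 (integrable_g_mul hσ (pbar p) q),
    integral_sub (integrable_g_mul hσ p q) (integrable_g_mul hσ p (pbar q)),
    integral_g_mul hσ p q, integral_g_mul hσ p (pbar q), integral_g_mul hσ (pbar p) q,
    integral_g_mul hσ (pbar p) (pbar q), norm_pbar_sub_pbar p q, norm_pbar_sub p q]
  ring

lemma multiset_integrable {α : Type*} (D : Multiset α) (f : α → V → ℝ)
    (h : ∀ a, Integrable (f a)) :
    Integrable (fun x => (D.map (fun a => f a x)).sum) := by
  induction D using Multiset.induction_on with
  | empty => simp only [Multiset.map_zero, Multiset.sum_zero]; exact integrable_zero _ _ _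
  | cons a s ih =>
    simp only [Multiset.map_cons, Multiset.sum_cons]
    exact (h a).add ih

lemma multiset_integral {α : Type*} (D : Multiset α) (f : α → V → ℝ)
    (h : ∀ a, Integrable (f a)) :
    ∫ x, (D.map (fun a => f a x)).sum = (D.map (fun a => ∫ x, f a x)).sum := by
  induction D using Multiset.induction_on with
  | empty => simp
  | cons a s ih =>
    simp only [Multiset.map_cons, Multiset.sum_cons]
    rw [integral_add (h a) (multiset_integrable s f h), ih]

/-- The feature function of a multiset. -/
noncomputable def phi (σ : ℝ) (D : Multiset V) (x : V) : ℝ :=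
  ((D.map (fun p => psi σ p x))).sum

lemma phi_mul_eq (F G : Multiset V) (x : V) :
    phi σ F x * phi σ G x =
      (F.map (fun p => (G.map (fun q => psi σ p x * psi σ q x)).sum)).sum := by
  unfold phi
  rw [← Multiset.sum_map_mul_right]
  congr 1
  exact Multiset.map_congr rfl fun p _ => (Multiset.sum_map_mul_left).symm

lemma integrable_phi_mul (hσ : 0 < σ) (F G : Multiset V) :
    Integrable (fun x => phi σ F x * phi σ G x) := by
  have e : (fun x => phi σ F x * phi σ G x) =
      fun x => (F.map (fun p => (G.map (fun q => psi σ p x * psi σ q x)).sum)).sum := by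
    funext x; exact phi_mul_eq F G x
  rw [e]
  exact multiset_integrable F _ fun p => multiset_integrable G _ fun q =>
    integrable_psi_mul hσ p q

lemma integral_phi_mul (hσ : 0 < σ) (F G : Multiset V) :
    ∫ x, phi σ F x * phi σ G x = (32*π^2*σ^2) * kPSS σ F G := by
  have e : (fun x => phi σ F x * phi σ G x) =
      fun x => (F.map (fun p => (G.map (fun q => psi σ p x * psi σ q x)).sum)).sum := by
    funext x; exact phi_mul_eq F G x
  rw [e, multiset_integral F _ (fun p => multiset_integrable G _ fun q =>
    integrable_psi_mul hσ p q)]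
  have e2 : ∀ p : V, (∫ x, (G.map (fun q => psi σ p x * psi σ q x)).sum)
      = (4*π*σ) * (G.map (fun q =>
          rexp (-‖p - q‖^2/(8*σ)) - rexp (-‖p - pbar q‖^2/(8*σ)))).sum := by
    intro p
    rw [multiset_integral G _ fun q => integrable_psi_mul hσ p q,
      Multiset.map_congr rfl fun q _ => integral_psi_mul hσ p q]
    exact Multiset.sum_map_mul_left
  rw [Multiset.map_congr rfl fun p _ => e2 p, Multiset.sum_map_mul_left]
  unfold kPSS
  have hπ := Real.pi_pos
  rw [← mul_assoc]
  congr 1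
  field_simp
  ring

end KPSSaux

open KPSSaux MeasureTheory in
/-- the persistence scale space kernel is positive definite. -/
theorem kPSS_posdef (σ : ℝ) (hσ : 0 < σ) (m : ℕ)
    (F : Fin m → Multiset (EuclideanSpace ℝ (Fin 2))) (c : Fin m → ℝ) :
    0 ≤ ∑ i, ∑ j, c i * c j * kPSS σ (F i) (F j) := by
  have hπ := Real.pi_pos
  have hK : (0:ℝ) < 32*π^2*σ^2 := by positivity
  have key : ∀ i j, Integrable (fun x => (c i * phi σ (F i) x) * (c j * phi σ (F j) x)) := by
    intro i j
    have h := ((integrable_phi_mul hσ (F i) (F j)).const_mul (c i * c j))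
    exact h.congr (Filter.Eventually.of_forall fun x => by ring)
  have h1 : 0 ≤ ∫ x, (∑ i, c i * phi σ (F i) x)^2 :=
    integral_nonneg fun x => sq_nonneg _
  have h2 : (∫ x, (∑ i, c i * phi σ (F i) x)^2)
      = ∑ i, ∑ j, (c i * c j) * ((32*π^2*σ^2) * kPSS σ (F i) (F j)) := by
    have e : (fun x => (∑ i, c i * phi σ (F i) x)^2)
        = fun x => ∑ i, ∑ j, (c i * phi σ (F i) x) * (c j * phi σ (F j) x) := by
      funext x
      rw [sq, Finset.sum_mul_sum]
    rw [e, integral_finset_sum _ (fun i _ => integrable_finset_sum _ fun j _ => key i j)]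
    refine Finset.sum_congr rfl fun i _ => ?_
    rw [integral_finset_sum _ fun j _ => key i j]
    refine Finset.sum_congr rfl fun j _ => ?_
    have e2 : (fun x => (c i * phi σ (F i) x) * (c j * phi σ (F j) x))
        = fun x => (c i * c j) * (phi σ (F i) x * phi σ (F j) x) := by
      funext x; ring
    rw [e2, integral_const_mul, integral_phi_mul hσ]
  have h3 : ∑ i, ∑ j, (c i * c j) * ((32*π^2*σ^2) * kPSS σ (F i) (F j))
      = (32*π^2*σ^2) * ∑ i, ∑ j, c i * c j * kPSS σ (F i) (F j) := by
    rw [Finset.mul_sum]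
    refine Finset.sum_congr rfl fun i _ => ?_
    rw [Finset.mul_sum]
    refine Finset.sum_congr rfl fun j _ => ?_
    ring
  rw [h2, h3] at h1
  exact nonneg_of_mul_nonneg_right h1 hK
end

section
/- Landscape distance grows unboundedly for translated diagrams: for λ ≥ 0, let F_λ = {(-λ, λ)} and G_λ = {(-λ+1, λ+1)} be one-point persistence diagrams. The persistence landscape of a one-point diagram {(b,d)} is λ₁(t) = max(0, min(t - b, d - t)) (and λ_k = 0 for k ≥ 2). Then ‖λ^{F_λ} - λ^{G_λ}‖_{L²(ℝ)}² grows linearly in λ as λ → ∞; in particular the landscape distance ‖λ^{F_λ} - λ^{G_λ}‖_{L²} is unbounded in λ. -/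
set_option maxHeartbeats 1600000
open MeasureTheory Real

/-- The persistence landscape (first landscape function) of the one-point diagram {(b,d)}. -/
noncomputable def landscape (b d : ℝ) (t : ℝ) : ℝ :=
  max 0 (min (t - b) (d - t))

lemma landscape_integral_eq (l : ℝ) (hl : 1 ≤ l) :
    (∫ t : ℝ, (landscape (-l) l t - landscape (-l + 1) (l + 1) t) ^ 2) = 2 * l - 1 := by
  set f : ℝ → ℝ := fun t => (landscape (-l) l t - landscape (-l + 1) (l + 1) t) ^ 2 with hf
  have hcont : Continuous f := by
    unfold f
    unfold landscape
    fun_prop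
  have hint : ∀ a b : ℝ, IntervalIntegrable f volume a b := fun a b =>
    hcont.intervalIntegrable a b
  have hzero : ∀ t ∉ Set.Ioc (-l) (l + 1), f t = 0 := by
    intro t ht
    simp only [Set.mem_Ioc, not_and_or, not_lt, not_le] at ht
    unfold f
    unfold landscape
    simp only [max_def, min_def]
    rcases ht with h | h <;> split_ifs <;> first | ring1 | (exfalso; linarith) | nlinarith
  have h1 : (∫ t : ℝ, f t) = ∫ t in (-l)..(l + 1), f t := by
    rw [intervalIntegral.integral_of_le (by linarith),
      MeasureTheory.setIntegral_eq_integral_of_forall_compl_eq_zero hzero]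
  -- piece computations
  have A1 : (∫ t in (-l)..(-l + 1), f t) = 1 / 3 := by
    rw [intervalIntegral.integral_congr (g := fun t => (t + l) ^ 2)
      (by
        rw [Set.uIcc_of_le (by linarith)]
        intro t ht
        obtain ⟨h1, h2⟩ := ht
        unfold f
        unfold landscape
        simp only [max_def, min_def]
        split_ifs <;> first | ring1 | (exfalso; linarith) | nlinarith)]
    rw [intervalIntegral.integral_comp_add_right (fun x => x ^ 2) l]
    rw [integral_pow]
    norm_num
  have A2 : (∫ t in (-l + 1)..(0 : ℝ), f t) = l - 1 := by
    rw [intervalIntegral.integral_congr (g := fun _ => (1 : ℝ))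
      (by
        rw [Set.uIcc_of_le (by linarith)]
        intro t ht
        obtain ⟨h1, h2⟩ := ht
        unfold f
        unfold landscape
        simp only [max_def, min_def]
        split_ifs <;> first | ring1 | (exfalso; linarith) | nlinarith)]
    simp [smul_eq_mul]
    try ring
  have A3 : (∫ t in (0 : ℝ)..1, f t) = 1 / 3 := by
    rw [intervalIntegral.integral_congr (g := fun t => 4 * (t - 1 / 2) ^ 2)
      (by
        rw [Set.uIcc_of_le (by norm_num)]
        intro t ht
        obtain ⟨h1, h2⟩ := ht
        unfold f
        unfold landscape
        simp only [max_def, min_def]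
        split_ifs <;> first | ring1 | (exfalso; linarith) | nlinarith)]
    rw [intervalIntegral.integral_const_mul]
    rw [intervalIntegral.integral_comp_sub_right (fun x => x ^ 2) (1 / 2)]
    rw [integral_pow]
    norm_num
  have A4 : (∫ t in (1 : ℝ)..l, f t) = l - 1 := by
    rw [intervalIntegral.integral_congr (g := fun _ => (1 : ℝ))
      (by
        rw [Set.uIcc_of_le (by linarith)]
        intro t ht
        obtain ⟨h1, h2⟩ := ht
        unfold f
        unfold landscape
        simp only [max_def, min_def]
        split_ifs <;> first | ring1 | (exfalso; linarith) | nlinarith)]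
    simp [smul_eq_mul]
    try ring
  have A5 : (∫ t in l..(l + 1), f t) = 1 / 3 := by
    rw [intervalIntegral.integral_congr (g := fun t => (t - (l + 1)) ^ 2)
      (by
        rw [Set.uIcc_of_le (by linarith)]
        intro t ht
        obtain ⟨h1, h2⟩ := ht
        unfold f
        unfold landscape
        simp only [max_def, min_def]
        split_ifs <;> first | ring1 | (exfalso; linarith) | nlinarith)]
    rw [intervalIntegral.integral_comp_sub_right (fun x => x ^ 2) (l + 1)]
    rw [integral_pow]
    norm_num
  rw [h1,
    ← intervalIntegral.integral_add_adjacent_intervals (a := -l) (b := -l + 1) (c := l + 1)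
      (hint _ _) (hint _ _),
    ← intervalIntegral.integral_add_adjacent_intervals (a := -l + 1) (b := 0) (c := l + 1)
      (hint _ _) (hint _ _),
    ← intervalIntegral.integral_add_adjacent_intervals (a := (0 : ℝ)) (b := 1) (c := l + 1)
      (hint _ _) (hint _ _),
    ← intervalIntegral.integral_add_adjacent_intervals (a := (1 : ℝ)) (b := l) (c := l + 1)
      (hint _ _) (hint _ _),
    A1, A2, A3, A4, A5]
  ring

/-- the landscape L² distance between the one-point diagrams
F_λ = {(-λ,λ)} and G_λ = {(-λ+1,λ+1)} grows linearly in λ (its square equals 2λ - 1 for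
λ ≥ 1); in particular it is unbounded. -/
theorem landscape_distance_unbounded :
    (∀ l : ℝ, 1 ≤ l →
      (∫ t : ℝ, (landscape (-l) l t - landscape (-l + 1) (l + 1) t) ^ 2) = 2 * l - 1) ∧
    ∀ M : ℝ, ∃ l : ℝ,
      Real.sqrt (∫ t : ℝ, (landscape (-l) l t - landscape (-l + 1) (l + 1) t) ^ 2) > M := by
  refine ⟨landscape_integral_eq, fun M => ?_⟩
  refine ⟨max 1 (M ^ 2 / 2 + 1), ?_⟩
  have hl : (1 : ℝ) ≤ max 1 (M ^ 2 / 2 + 1) := le_max_left _ _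
  rw [landscape_integral_eq _ hl]
  have h2 : M ^ 2 < 2 * max 1 (M ^ 2 / 2 + 1) - 1 := by
    have := le_max_right 1 (M ^ 2 / 2 + 1)
    linarith
  calc M ≤ |M| := le_abs_self M
    _ = Real.sqrt (M ^ 2) := (Real.sqrt_sq_eq_abs M).symm
    _ < Real.sqrt (2 * max 1 (M ^ 2 / 2 + 1) - 1) := by
        apply Real.sqrt_lt_sqrt (sq_nonneg M) h2
end
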